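/- Suppose f : (−R,R) → ℝ is differentiable and Loewner monotone on the set of n×n positive semidefinite matrices of rank at most k (2 ≤ k ≤ n) with entries in (−R,R). If A is an irreducible matrix in this set, then f'[A] (the entrywise application of f' to A) is positive semidefinite. -/

import Mathlib

open scoped ENNReal NNReal
open Filter Matrix

private lemma nnabs_coe_ennreal (y : ℝ) : ((Real.nnabs y : ℝ≥0∞)) = ENNReal.ofReal |y| := by
  rw [← Real.toNNReal_abs]; rfl

private lemma ent_eventually (R : ℝ≥0∞) (a c : ℝ) (h : (Real.nnabs a : ℝ≥0∞) < R) :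
    ∀ᶠ t in nhds (0:ℝ), ((Real.nnabs (a + t * c) : ℝ≥0∞)) < R := by
  have hc : Continuous fun t : ℝ => ENNReal.ofReal |a + t * c| :=
    ENNReal.continuous_ofReal.comp ((continuous_const.add (continuous_id.mul continuous_const)).abs)
  have ht : Tendsto (fun t : ℝ => ((Real.nnabs (a + t * c) : ℝ≥0∞))) (nhds 0) (nhds ((Real.nnabs a : ℝ≥0∞))) := by
    simp only [nnabs_coe_ennreal]
    have := hc.continuousAt (x := (0:ℝ))
    unfold ContinuousAt at this
    simpa using this
  exact ht.eventually_lt_const h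

private lemma quad_form (n : ℕ) (M : Matrix (Fin n) (Fin n) ℝ) (x : Fin n → ℝ) :
    x ⬝ᵥ (M *ᵥ x) = ∑ i, ∑ j, x i * x j * M i j := by
  simp only [dotProduct, Matrix.mulVec, dotProduct]
  refine Finset.sum_congr rfl fun i _ => ?_
  rw [Finset.mul_sum]
  exact Finset.sum_congr rfl fun j _ => by ring

theorem stmt9 (R : ℝ≥0∞) (hR : 0 < R) (n k : ℕ) (hk : 2 ≤ k) (hkn : k ≤ n)
    (f f' : ℝ → ℝ)
    (hderiv : ∀ x : ℝ, (Real.nnabs x : ℝ≥0∞) < R → HasDerivAt f (f' x) x)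
    (hmono : ∀ A B : Matrix (Fin n) (Fin n) ℝ,
      (∀ i j, (Real.nnabs (A i j) : ℝ≥0∞) < R) →
      (∀ i j, (Real.nnabs (B i j) : ℝ≥0∞) < R) →
      A.rank ≤ k → B.rank ≤ k →
      B.PosSemidef → (A - B).PosSemidef →
      (A.map f - B.map f).PosSemidef)
    (A : Matrix (Fin n) (Fin n) ℝ) (hA : A.PosSemidef) (hrk : A.rank ≤ k)
    (hent : ∀ i j, (Real.nnabs (A i j) : ℝ≥0∞) < R)
    (hirr : ∀ S : Set (Fin n), S.Nonempty → S ≠ Set.univ →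
      ∃ i ∈ S, ∃ j ∈ Sᶜ, A i j ≠ 0) :
    (A.map f').PosSemidef := by
  have hn2 : 2 ≤ n := hk.trans hkn
  -- symmetry of A
  have hsymm : ∀ i j, A j i = A i j := by
    intro i j
    conv_lhs => rw [← hA.1]
    simp [Matrix.conjTranspose_apply]
  -- each row of A is nonzero
  have hrow : ∀ i : Fin n, ∃ j, A i j ≠ 0 := by
    intro i
    have hne : ({i} : Set (Fin n)) ≠ Set.univ := by
      intro h
      obtain ⟨j, hj⟩ := Fintype.exists_ne_of_one_lt_card (by simp; omega) i
      have : j ∈ ({i} : Set (Fin n)) := h ▸ Set.mem_univ j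
      exact hj (Set.mem_singleton_iff.mp this)
    obtain ⟨i', hi', j, _, hAij⟩ := hirr {i} ⟨i, rfl⟩ hne
    rw [Set.mem_singleton_iff] at hi'
    exact ⟨j, hi' ▸ hAij⟩
  -- find c with (A c)ᵢ ≠ 0 for all i
  obtain ⟨c, hc⟩ : ∃ c : Fin n → ℝ, ∀ i, (A *ᵥ c) i ≠ 0 := by
    by_contra hcon
    push_neg at hcon
    set φ : Fin n → ((Fin n → ℝ) →ₗ[ℝ] ℝ) := fun i => (LinearMap.proj i).comp A.mulVecLin with hφ
    have hcover : ⋃ i, ((LinearMap.ker (φ i) : Submodule ℝ (Fin n → ℝ)) : Set (Fin n → ℝ)) = Set.univ := by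
      ext v
      simp only [Set.mem_iUnion, Set.mem_univ, iff_true, SetLike.mem_coe, LinearMap.mem_ker]
      exact hcon v
    obtain ⟨i, hi⟩ := Subspace.exists_eq_top_of_iUnion_eq_univ hcover
    obtain ⟨j, hj⟩ := hrow i
    apply hj
    have : φ i (Pi.single j 1) = 0 := by rw [← LinearMap.mem_ker, hi]; trivial
    simpa [hφ, Matrix.mulVecLin_apply, Matrix.mulVec_single] using this
  set w : Fin n → ℝ := A *ᵥ c with hw
  set W : Matrix (Fin n) (Fin n) ℝ := Matrix.vecMulVec w w with hWdef
  -- key quadratic inequality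
  have key : ∀ x : Fin n → ℝ,
      0 ≤ ∑ i, ∑ j, x i * x j * (f' (A i j) * (w i * w j)) := by
    intro x
    set h : ℝ → ℝ := fun t => ∑ i, ∑ j, x i * x j * f (A i j + t * (w i * w j)) with hh
    -- derivative of h at 0
    have hd : HasDerivAt h (∑ i, ∑ j, x i * x j * (f' (A i j) * (w i * w j))) 0 := by
      refine HasDerivAt.fun_sum fun i _ => HasDerivAt.fun_sum fun j _ => ?_
      have hinner : HasDerivAt (fun t : ℝ => A i j + t * (w i * w j)) (w i * w j) 0 := by
        simpa using ((hasDerivAt_id (0:ℝ)).mul_const (w i * w j)).const_add (A i j)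
      have hf : HasDerivAt f (f' (A i j)) (A i j + 0 * (w i * w j)) := by
        simpa using hderiv _ (hent i j)
      have hcomp := hf.comp 0 hinner
      simpa [Function.comp] using hcomp.const_mul (x i * x j)
    -- eventual monotonicity
    have hentev : ∀ᶠ t in nhds (0:ℝ), ∀ i j : Fin n,
        ((Real.nnabs (A i j + t * (w i * w j)) : ℝ≥0∞)) < R := by
      rw [eventually_all]
      intro i
      rw [eventually_all]
      intro j
      exact ent_eventually R (A i j) (w i * w j) (hent i j)
    have hev : ∀ᶠ t in nhdsWithin (0:ℝ) (Set.Ioi 0), 0 ≤ h t - h 0 := by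
      filter_upwards [hentev.filter_mono nhdsWithin_le_nhds, self_mem_nhdsWithin] with t hentt ht
      have ht' : (0:ℝ) < t := ht
      -- PSD of t • W
      have hWpsd : (t • W).PosSemidef := by
        refine Matrix.PosSemidef.of_dotProduct_mulVec_nonneg ?_ ?_
        · have hWs : Wᴴ = W := by
            ext i j
            simp only [Matrix.conjTranspose_apply, hWdef, Matrix.vecMulVec_apply, star_trivial]
            ring
          show (t • W)ᴴ = t • W
          rw [Matrix.conjTranspose_smul, hWs, star_trivial]
        · intro y
          have hq : star y ⬝ᵥ ((t • W) *ᵥ y) = t * ((∑ i, w i * y i) * (∑ j, w j * y j)) := by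
            simp only [star_trivial, dotProduct, Matrix.mulVec, Matrix.smul_apply,
              Matrix.vecMulVec_apply, smul_eq_mul, hWdef]
            rw [Finset.sum_mul_sum, Finset.mul_sum]
            refine Finset.sum_congr rfl fun i _ => ?_
            rw [Finset.mul_sum, Finset.mul_sum]
            exact Finset.sum_congr rfl fun j _ => by ring
          rw [hq]
          exact mul_nonneg ht'.le (mul_self_nonneg _)
      -- rank bound
      have hrk' : (A + t • W).rank ≤ k := by
        refine le_trans ?_ hrk
        refine Submodule.finrank_mono ?_
        rintro y ⟨v, rfl⟩
        refine ⟨v + (t * (w ⬝ᵥ v)) • c, ?_⟩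
        have hWv : W *ᵥ v = (w ⬝ᵥ v) • w := by
          funext i
          simp only [hWdef, Matrix.mulVec, Matrix.vecMulVec_apply, dotProduct,
            Pi.smul_apply, smul_eq_mul]
          rw [Finset.sum_mul]
          exact Finset.sum_congr rfl fun j _ => by ring
        simp only [Matrix.mulVecLin_apply, Matrix.mulVec_add, Matrix.mulVec_smul,
          Matrix.add_mulVec, Matrix.smul_mulVec, hWv, ← hw]
        module
      -- entries of A + t • W
      have hent' : ∀ i j, ((Real.nnabs ((A + t • W) i j) : ℝ≥0∞)) < R := by
        intro i j
        simpa [hWdef, Matrix.add_apply, Matrix.smul_apply, Matrix.vecMulVec_apply] using hentt i j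
      have hsub : ((A + t • W) - A).PosSemidef := by simpa using hWpsd
      have hm := hmono (A + t • W) A hent' hent hrk' hrk hA hsub
      have hq := hm.dotProduct_mulVec_nonneg x
      rw [star_trivial] at hq
      calc (0:ℝ) ≤ x ⬝ᵥ (((A + t • W).map f - A.map f) *ᵥ x) := hq
        _ = h t - h 0 := by
            rw [quad_form]
            simp only [hh]
            rw [← Finset.sum_sub_distrib]
            refine Finset.sum_congr rfl fun i _ => ?_
            rw [← Finset.sum_sub_distrib]
            refine Finset.sum_congr rfl fun j _ => ?_
            simp only [Matrix.sub_apply, Matrix.map_apply, Matrix.add_apply,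
              Matrix.smul_apply, Matrix.vecMulVec_apply, smul_eq_mul, hWdef]
            ring
    -- conclude derivative nonneg
    have hslope := (hd.hasDerivWithinAt (s := Set.Ioi (0:ℝ)))
    rw [hasDerivWithinAt_iff_tendsto_slope] at hslope
    have hdiff : (Set.Ioi (0:ℝ)) \ {0} = Set.Ioi 0 := by
      simp [Set.diff_singleton_eq_self]
    rw [hdiff] at hslope
    refine ge_of_tendsto hslope ?_
    filter_upwards [hev, self_mem_nhdsWithin] with t h0 ht
    have ht' : (0:ℝ) < t := ht
    rw [slope_def_field]
    simp only [sub_zero]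
    exact div_nonneg h0 ht'.le
  -- assemble PosSemidef
  refine Matrix.PosSemidef.of_dotProduct_mulVec_nonneg ?_ ?_
  · ext i j
    simp [Matrix.conjTranspose_apply, Matrix.map_apply, hsymm i j]
  · intro u
    rw [star_trivial]
    have hkey := key (fun i => u i / w i)
    have heq : ∀ i j : Fin n,
        (u i / w i) * (u j / w j) * (f' (A i j) * (w i * w j)) = u i * (f' (A i j) * u j) := by
      intro i j
      have h1 := hc i
      have h2 := hc j
      rw [hw] at *
      field_simp
    rw [quad_form]
    refine le_trans hkey (le_of_eq ?_)
    refine Finset.sum_congr rfl fun i _ => Finset.sum_congr rfl fun j _ => ?_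
    have := heq i j
    simp only [hw] at this ⊢
    rw [this]
    simp only [Matrix.map_apply]
    ring
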